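/- Let H : ℝ → ℝ be smooth, L-periodic, with σ > max H'. Define γ(p) = exp((-H(p)+σp)/ν²) and c = [ν²(γ(L) - γ(0))]^{-1} ∫₀^L γ(q) dq. Then the function u(p) = γ(p)^{-1}( c γ(0) + ν^{-2}∫₀^p γ(q) dq ) solves ν² u'(p) = (H'(p) - σ) u(p) + 1 on ℝ and is L-periodic, and c is the unique initial value u(0) for which the solution of this ODE is L-periodic. -/

import Mathlib

open MeasureTheory intervalIntegral

theorem stmt_12 (L σ ν : ℝ) (hL : 0 < L) (hν : 0 < ν)
    (H : ℝ → ℝ) (hH : ContDiff ℝ 1 H) (hper : ∀ p, H (p + L) = H p)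
    (hσ : ∀ p, deriv H p < σ)
    (γ : ℝ → ℝ) (hγ : ∀ p, γ p = Real.exp ((-H p + σ * p) / ν ^ 2))
    (c : ℝ) (hc : c = (ν ^ 2 * (γ L - γ 0))⁻¹ * ∫ q in (0:ℝ)..L, γ q)
    (u : ℝ → ℝ)
    (hu : ∀ p, u p = (γ p)⁻¹ * (c * γ 0 + ν⁻¹ ^ 2 * ∫ q in (0:ℝ)..p, γ q)) :
    (∀ p, HasDerivAt u (((deriv H p - σ) * u p + 1) / ν ^ 2) p) ∧
      (∀ p, u (p + L) = u p) ∧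
      ∀ c' : ℝ,
        (∀ p, (γ (p + L))⁻¹ * (c' * γ 0 + ν⁻¹ ^ 2 * ∫ q in (0:ℝ)..(p + L), γ q)
            = (γ p)⁻¹ * (c' * γ 0 + ν⁻¹ ^ 2 * ∫ q in (0:ℝ)..p, γ q)) →
          c' = c := by
  have hν2 : (0:ℝ) < ν ^ 2 := by positivity
  have hγpos : ∀ p, 0 < γ p := fun p => (hγ p) ▸ Real.exp_pos _
  have hHd : Differentiable ℝ H := hH.differentiable one_ne_zero
  have hγcont : Continuous γ := by
    have : γ = fun p => Real.exp ((-H p + σ * p) / ν ^ 2) := funext hγ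
    rw [this]
    exact ((hHd.continuous.neg.add (continuous_const.mul continuous_id)).div_const _).rexp
  -- derivative of γ
  have hγ' : ∀ p, HasDerivAt γ (γ p * ((σ - deriv H p) / ν ^ 2)) p := by
    intro p
    have heq : γ = fun p => Real.exp ((-H p + σ * p) / ν ^ 2) := funext hγ
    have h1 : HasDerivAt H (deriv H p) p := (hHd p).hasDerivAt
    have h2 : HasDerivAt (fun q => -H q + σ * q) (-deriv H p + σ) p := by
      exact (h1.neg.add ((hasDerivAt_id' p).const_mul σ)).congr_deriv (by ring)
    have h3 : HasDerivAt (fun q => (-H q + σ * q) / ν ^ 2)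
        ((-deriv H p + σ) / ν ^ 2) p := h2.div_const _
    have h4 := h3.exp
    rw [heq]
    convert h4 using 1
    rw [← hγ p, heq]
    ring
  -- integrability
  have hint : ∀ a b : ℝ, IntervalIntegrable γ volume a b :=
    fun a b => hγcont.intervalIntegrable a b
  -- derivative of the integral
  have hF : ∀ p, HasDerivAt (fun x => ∫ q in (0:ℝ)..x, γ q) (γ p) p := fun p =>
    intervalIntegral.integral_hasDerivAt_right (hint 0 p)
      (hγcont.stronglyMeasurableAtFilter _ _) hγcont.continuousAt
  -- σ > 0
  have hσ0 : 0 < σ := by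
    have hHL : H 0 = H L := by have := hper 0; rw [zero_add] at this; exact this.symm
    obtain ⟨p0, _, hp0⟩ := exists_deriv_eq_zero hL (hHd.continuous.continuousOn) hHL
    have := hσ p0
    rw [hp0] at this
    exact this
  set K : ℝ := Real.exp (σ * L / ν ^ 2) with hK
  have hK1 : 1 < K := by
    rw [hK, ← Real.exp_zero]
    exact Real.exp_lt_exp.2 (by positivity)
  -- shift of γ
  have hγL : ∀ p, γ (p + L) = γ p * K := by
    intro p
    rw [hγ (p + L), hγ p, hK, ← Real.exp_add, hper]
    congr 1
    ring
  -- shift of the integral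
  have hInt : ∀ p, (∫ q in (0:ℝ)..(p + L), γ q)
      = (∫ q in (0:ℝ)..L, γ q) + K * ∫ q in (0:ℝ)..p, γ q := by
    intro p
    have h1 : (∫ q in (0:ℝ)..L, γ q) + (∫ q in L..(p + L), γ q)
        = ∫ q in (0:ℝ)..(p + L), γ q :=
      intervalIntegral.integral_add_adjacent_intervals (hint 0 L) (hint L (p + L))
    have h2 : (∫ q in L..(p + L), γ q) = ∫ q in (0:ℝ)..p, γ (q + L) := by
      rw [intervalIntegral.integral_comp_add_right γ L, zero_add]
    have h3 : (∫ q in (0:ℝ)..p, γ (q + L)) = K * ∫ q in (0:ℝ)..p, γ q := by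
      simp only [hγL]
      rw [intervalIntegral.integral_mul_const, mul_comm]
    rw [← h1, h2, h3]
  set I : ℝ := ∫ q in (0:ℝ)..L, γ q with hI
  have hγL0 : γ L = γ 0 * K := by have := hγL 0; rwa [zero_add] at this
  have hdiff : γ L - γ 0 = γ 0 * (K - 1) := by rw [hγL0]; ring
  have hdpos : 0 < γ L - γ 0 := by
    rw [hdiff]; exact mul_pos (hγpos 0) (by linarith)
  have hcI : c * (ν ^ 2 * (γ L - γ 0)) = I := by
    rw [hc]
    field_simp
  refine ⟨?_, ?_, ?_⟩
  · -- derivative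
    intro p
    have hUd : HasDerivAt u
        (-(γ p * ((σ - deriv H p) / ν ^ 2)) / γ p ^ 2 *
            (c * γ 0 + ν⁻¹ ^ 2 * ∫ q in (0:ℝ)..p, γ q)
          + (γ p)⁻¹ * (ν⁻¹ ^ 2 * γ p)) p := by
      have hue : u = fun x => (γ x)⁻¹ * (c * γ 0 + ν⁻¹ ^ 2 * ∫ q in (0:ℝ)..x, γ q) :=
        funext hu
      rw [hue]
      exact ((hγ' p).inv (hγpos p).ne').mul
        (HasDerivAt.const_add (c * γ 0) (HasDerivAt.const_mul (ν⁻¹ ^ 2) (hF p)))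
    convert hUd using 1
    rw [hu p]
    have h0 : γ p ≠ 0 := (hγpos p).ne'
    have h1 : ν ≠ 0 := hν.ne'
    field_simp
    ring
  · -- periodicity
    intro p
    rw [hu (p + L), hu p, hγL p, hInt p]
    have h0 : γ p ≠ 0 := (hγpos p).ne'
    have hK0 : K ≠ 0 := by positivity
    have h1 : ν ≠ 0 := hν.ne'
    have key2 : ν⁻¹ ^ 2 * I = c * γ 0 * (K - 1) := by
      rw [← hcI, hdiff]
      field_simp
    have hmain : c * γ 0 + ν⁻¹ ^ 2 * (I + K * ∫ q in (0:ℝ)..p, γ q)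
        = K * (c * γ 0 + ν⁻¹ ^ 2 * ∫ q in (0:ℝ)..p, γ q) := by
      linear_combination key2
    rw [hmain]
    field_simp
  · -- uniqueness
    intro c' h
    have h0 := h 0
    rw [zero_add, intervalIntegral.integral_same, hγL0] at h0
    have hγ0 : γ 0 ≠ 0 := (hγpos 0).ne'
    have hK0 : (0:ℝ) < K := by positivity
    have h1 : ν ≠ 0 := hν.ne'
    field_simp at h0
    -- h0 should give c' * γ 0 * (K - 1) = ν⁻¹^2 * I  (in some form)
    have hc'I : c' * (ν ^ 2 * (γ L - γ 0)) = I := by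
      rw [hdiff]
      nlinarith [h0]
    have := hcI
    have hne : ν ^ 2 * (γ L - γ 0) ≠ 0 := by positivity
    field_simp at hc'I this
    exact mul_right_cancel₀ hne (by linarith [hc'I, hcI])
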